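/- arXiv:1203.4409 — 4 statements merged into one kernel-verified Lean document; each statement's English description precedes it below -/
import Mathlib

section
/- Let f : M → M be a continuous map on a compact metric space M. If Φ = {φ_n} is an almost additive sequence of continuous functions, then Φ is asymptotically additive; moreover, for any ξ > 0 there exists k = k(ξ) ≥ 1 such that limsup_{n→∞} (1/n) ‖ φ_n − S_n( (1/k) φ_k ) ‖ < ξ, where ‖·‖ is the sup norm on C(M). -/
open MeasureTheory Filter Topology

section Preamble

variable {M : Type*}

/-- Birkhoff sum `S_n φ = ∑_{j<n} φ ∘ f^j`. -/
noncomputable def birkhoff (f : M → M) (φ : M → ℝ) (n : ℕ) (x : M) : ℝ :=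
  ∑ j ∈ Finset.range n, φ (f^[j] x)

/-- Dynamical (Bowen) ball `B_n(x,ε)`. -/
def dynBall [PseudoMetricSpace M] (f : M → M) (n : ℕ) (x : M) (ε : ℝ) : Set M :=
  {y | ∀ i < n, dist (f^[i] x) (f^[i] y) < ε}

/-- A mistake function `g : ℕ × (0,ε₀] → ℕ`, extended by `g(n,ε) = g(n,ε₀)` for `ε > ε₀`. -/
def IsMistakeFunction (g : ℕ → ℝ → ℕ) (ε₀ : ℝ) : Prop :=
  0 < ε₀ ∧ (∀ ε : ℝ, 0 < ε → ∀ n : ℕ, g n ε ≤ g (n + 1) ε) ∧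
    (∀ ε : ℝ, 0 < ε → Tendsto (fun n : ℕ => (g n ε : ℝ) / n) atTop (𝓝 0)) ∧
    (∀ ε : ℝ, ε₀ < ε → ∀ n : ℕ, g n ε = g n ε₀)

/-- Mistake dynamical ball `B_n(g;x,ε) = ⋃_{Λ ∈ I(g;n,ε)} B_Λ(x,ε)`. -/
def mistakeBall [PseudoMetricSpace M] (f : M → M) (g : ℕ → ℝ → ℕ) (n : ℕ) (x : M) (ε : ℝ) :
    Set M :=
  ⋃ Λ ∈ {Λ : Finset ℕ | Λ ⊆ Finset.range n ∧ n - g n ε ≤ Λ.card},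
    {y | ∀ i ∈ Λ, dist (f^[i] x) (f^[i] y) < ε}

/-- Entropy `H_μ(⋁_{i<n} f^{-i} α)` of the `n`-th dynamical refinement of a finite
measurable partition, encoded by a map `α : M → Fin k`. -/
noncomputable def partitionEntropy [MeasurableSpace M] (μ : Measure M) (f : M → M) {k : ℕ}
    (α : M → Fin k) (n : ℕ) : ℝ :=
  ∑ w : Fin n → Fin k, Real.negMulLog (μ {x | ∀ i : Fin n, α (f^[(i : ℕ)] x) = w i}).toReal

/-- Kolmogorov–Sinai (measure-theoretic) entropy `h_μ(f)`. -/
noncomputable def measEntropy [MeasurableSpace M] (f : M → M) (μ : Measure M) : ℝ :=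
  ⨆ (k : ℕ) (α : {α : M → Fin k // Measurable α}),
    Filter.liminf (fun n : ℕ => partitionEntropy μ f α.1 n / n) atTop

/-- `(n,ε)`-separated subsets. -/
def IsDynSeparated [PseudoMetricSpace M] (f : M → M) (n : ℕ) (ε : ℝ) (E : Finset M) : Prop :=
  ∀ x ∈ E, ∀ y ∈ E, x ≠ y → ∃ i < n, ε ≤ dist (f^[i] x) (f^[i] y)

/-- Topological entropy via `(n,ε)`-separated sets. -/
noncomputable def topEntropy [PseudoMetricSpace M] (f : M → M) : EReal :=
  ⨆ (ε : ℝ) (_ : 0 < ε), Filter.limsup (fun n : ℕ =>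
    ((Real.log (sSup {k : ℕ | ∃ E : Finset M, IsDynSeparated f n ε E ∧ E.card = k} : ℕ) /
      n : ℝ) : EReal)) atTop

/-- Non-additive topological pressure `P(f,Φ)`. -/
noncomputable def nonAddPressure [PseudoMetricSpace M] (f : M → M) (Φ : ℕ → M → ℝ) : EReal :=
  ⨆ (ε : ℝ) (_ : 0 < ε), Filter.limsup (fun n : ℕ =>
    ((Real.log (sSup {r : ℝ | ∃ E : Finset M, IsDynSeparated f n ε E ∧
        r = ∑ y ∈ E, Real.exp (Φ n y)}) / n : ℝ) : EReal)) atTop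

/-- `F_*(μ,Φ) = lim_n (1/n) ∫ φ_n dμ` (as a `limsup`, which equals the limit whenever the
latter exists). -/
noncomputable def Fstar [MeasurableSpace M] (Φ : ℕ → M → ℝ) (μ : Measure M) : ℝ :=
  Filter.limsup (fun n : ℕ => (∫ x, Φ n x ∂μ) / n) atTop

/-- Sub-additive sequence of potentials. -/
def SubAdditiveSeq (f : M → M) (Φ : ℕ → M → ℝ) : Prop :=
  ∀ m, 1 ≤ m → ∀ n, 1 ≤ n → ∀ x, Φ (m + n) x ≤ Φ m x + Φ n (f^[m] x)

/-- Almost additive sequence of potentials, with constant `C`. -/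
def AlmostAdditiveSeq (f : M → M) (Φ : ℕ → M → ℝ) (C : ℝ) : Prop :=
  ∀ m, 1 ≤ m → ∀ n, 1 ≤ n → ∀ x,
    Φ m x + Φ n (f^[m] x) - C ≤ Φ (m + n) x ∧ Φ (m + n) x ≤ Φ m x + Φ n (f^[m] x) + C

/-- Asymptotically additive sequence of continuous potentials. -/
def AsympAdditive [MetricSpace M] (f : M → M) (Φ : ℕ → M → ℝ) : Prop :=
  (∀ n, Continuous (Φ n)) ∧ ∀ ξ : ℝ, 0 < ξ → ∃ φ : M → ℝ, Continuous φ ∧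
    Filter.limsup (fun n : ℕ => (⨆ x, |Φ n x - birkhoff f φ n x|) / n) atTop < ξ

/-- Weak Gibbs measure for `Φ` on `Λ`. -/
def WeakGibbs [MetricSpace M] [MeasurableSpace M] (f : M → M) (Φ : ℕ → M → ℝ)
    (ν : Measure M) (Λ : Set M) : Prop :=
  ν Λ = 1 ∧ ∃ ε₀ > (0 : ℝ), ∀ ε : ℝ, 0 < ε → ε < ε₀ → ∃ K : ℕ → ℝ, (∀ n, 0 < K n) ∧
    Tendsto (fun n : ℕ => Real.log (K n) / n) atTop (𝓝 0) ∧
    ∀ x ∈ Λ, ∀ n : ℕ, 1 ≤ n →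
      (K n)⁻¹ * Real.exp (-(n : ℝ) * (nonAddPressure f Φ).toReal + Φ n x) ≤
          (ν (dynBall f n x ε)).toReal ∧
        (ν (dynBall f n x ε)).toReal ≤
          K n * Real.exp (-(n : ℝ) * (nonAddPressure f Φ).toReal + Φ n x)

/-- Gibbs measure for `Φ` (uniform constant `K`). -/
def GibbsMeasure [MetricSpace M] [MeasurableSpace M] (f : M → M) (Φ : ℕ → M → ℝ)
    (ν : Measure M) : Prop :=
  ∃ ε₀ > (0 : ℝ), ∃ K : ℝ, 0 < K ∧ ∀ ε : ℝ, 0 < ε → ε < ε₀ → ∀ x : M, ∀ n : ℕ, 1 ≤ n →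
    K⁻¹ * Real.exp (-(n : ℝ) * (nonAddPressure f Φ).toReal + Φ n x) ≤
        (ν (dynBall f n x ε)).toReal ∧
      (ν (dynBall f n x ε)).toReal ≤
        K * Real.exp (-(n : ℝ) * (nonAddPressure f Φ).toReal + Φ n x)

/-- Equilibrium state: an invariant probability measure attaining the variational principle. -/
def IsEquilibriumState [MetricSpace M] [MeasurableSpace M] (f : M → M) (Φ : ℕ → M → ℝ)
    (μ : Measure M) : Prop :=
  IsProbabilityMeasure μ ∧ MeasurePreserving f μ μ ∧
    ((measEntropy f μ + Fstar Φ μ : ℝ) : EReal) = nonAddPressure f Φ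

/-- Specification property. -/
def SpecificationProperty [MetricSpace M] (f : M → M) : Prop :=
  ∀ ε : ℝ, 0 < ε → ∃ N : ℕ, 1 ≤ N ∧
    ∀ (k : ℕ) (xs : Fin k → M) (ns ps : Fin k → ℕ), (∀ i, N ≤ ps i) →
      ∃ x : M, ∀ i : Fin k, ∀ j ≤ ns i,
        dist (f^[j + ∑ l ∈ Finset.univ.filter (fun l => l < i), (ns l + ps l)] x)
          (f^[j] (xs i)) ≤ ε

/-- `g`-almost specification property. -/
def AlmostSpecification [MetricSpace M] (f : M → M) (g : ℕ → ℝ → ℕ) : Prop :=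
  ∃ ε > (0 : ℝ), ∃ N : ℕ, ∀ (k : ℕ) (xs : Fin k → M) (ns : Fin k → ℕ), (∀ i, N ≤ ns i) →
    (⋂ i : Fin k,
      f^[∑ l ∈ Finset.univ.filter (fun l => l < i), ns l] ⁻¹'
        mistakeBall f g (ns i) (xs i) ε).Nonempty

/-- `h_m(g;f,x) = lim_{ε→0} limsup_n −(1/n) log m(B_n(g;x,ε))`. -/
noncomputable def mistakeUpper [MetricSpace M] [MeasurableSpace M] (m : Measure M) (f : M → M)
    (g : ℕ → ℝ → ℕ) (x : M) : ℝ :=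
  Filter.limsup (fun ε : ℝ =>
    Filter.limsup (fun n : ℕ => -Real.log ((m (mistakeBall f g n x ε)).toReal) / n) atTop)
    (𝓝[>] 0)

/-- Weak Bowen condition for a sequence of potentials. -/
def WeakBowen [MetricSpace M] (f : M → M) (Ψ : ℕ → M → ℝ) : Prop :=
  ∃ δ > (0 : ℝ), ∃ a : ℕ → ℝ, (∀ n, 0 < a n) ∧
    Tendsto (fun n : ℕ => a n / n) atTop (𝓝 0) ∧
    ∀ n, 1 ≤ n → ∀ x y z : M, y ∈ dynBall f n x δ → z ∈ dynBall f n x δ →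
      |Ψ n y - Ψ n z| ≤ a n

end Preamble
section Aux

variable {M : Type*}

/-- Bound on finitely many continuous functions on a compact space. -/
lemma exists_unif_bound [MetricSpace M] [CompactSpace M] (φ : ℕ → M → ℝ)
    (hφ : ∀ n, Continuous (φ n)) (k : ℕ) :
    ∃ D : ℝ, 0 ≤ D ∧ ∀ i ≤ k, ∀ x : M, |φ i x| ≤ D := by
  induction k with
  | zero =>
    obtain ⟨D, hD⟩ := IsCompact.exists_bound_of_continuousOn isCompact_univ
      ((hφ 0).continuousOn (s := Set.univ))
    refine ⟨max D 0, le_max_right _ _, fun i hi x => ?_⟩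
    interval_cases i
    exact le_trans (by simpa using hD x (Set.mem_univ x)) (le_max_left _ _)
  | succ k ih =>
    obtain ⟨D, hD0, hD⟩ := ih
    obtain ⟨E, hE⟩ := IsCompact.exists_bound_of_continuousOn isCompact_univ
      ((hφ (k + 1)).continuousOn (s := Set.univ))
    refine ⟨max D E, le_trans hD0 (le_max_left _ _), fun i hi x => ?_⟩
    rcases Nat.lt_or_ge i (k + 1) with h | h
    · exact le_trans (hD i (Nat.lt_succ_iff.mp h) x) (le_max_left _ _)
    · have : i = k + 1 := le_antisymm hi h
      subst this
      exact le_trans (by simpa using hE x (Set.mem_univ x)) (le_max_right _ _)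

/-- The key pointwise estimate comparing `k φ_n` with the Birkhoff sum of `φ_k`. -/
lemma key_estimate [MetricSpace M] (f : M → M) (φ : ℕ → M → ℝ) (C D : ℝ) (k : ℕ)
    (hk : 1 ≤ k) (hAA : AlmostAdditiveSeq f φ C)
    (hD : ∀ i ≤ k, ∀ x : M, |φ i x| ≤ D) (n : ℕ) (hn : 1 ≤ n) (x : M) :
    |(k : ℝ) * φ n x - birkhoff f (φ k) n x| ≤ n * C + k * (C + 2 * D) + 2 * D := by
  set g : ℕ → ℝ := fun j => φ k (f^[j] x) with hg
  set A : ℝ := ∑ j ∈ Finset.range n, g (j + 1) with hA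
  set T : ℝ := ∑ j ∈ Finset.range n, (φ (j + 1 + k) x - φ (j + 1) x) with hT
  set Q : ℝ := ∑ j ∈ Finset.range k, φ (n + (j + 1)) x with hQ
  set P : ℝ := ∑ j ∈ Finset.range k, φ (j + 1) x with hP
  -- birkhoff = A + g 0 - g n
  have hb : birkhoff f (φ k) n x = A + g 0 - g n := by
    have h1 : ∑ j ∈ Finset.range (n + 1), g j = A + g 0 := Finset.sum_range_succ' g n
    have h2 : ∑ j ∈ Finset.range (n + 1), g j = (∑ j ∈ Finset.range n, g j) + g n :=
      Finset.sum_range_succ g n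
    have : birkhoff f (φ k) n x = ∑ j ∈ Finset.range n, g j := rfl
    rw [this]; linarith
  -- |A - T| ≤ n * C
  have hAT : |A - T| ≤ n * C := by
    have : A - T = ∑ j ∈ Finset.range n, (g (j + 1) - (φ (j + 1 + k) x - φ (j + 1) x)) := by
      rw [hA, hT, ← Finset.sum_sub_distrib]
    rw [this]
    calc |∑ j ∈ Finset.range n, (g (j + 1) - (φ (j + 1 + k) x - φ (j + 1) x))|
        ≤ ∑ j ∈ Finset.range n, |g (j + 1) - (φ (j + 1 + k) x - φ (j + 1) x)| :=
          Finset.abs_sum_le_sum_abs _ _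
      _ ≤ ∑ _j ∈ Finset.range n, C := by
          refine Finset.sum_le_sum fun j _ => ?_
          have h := hAA (j + 1) (Nat.le_add_left 1 j) k hk x
          rw [abs_le]; constructor <;> [linarith [h.2]; linarith [h.1]]
      _ = n * C := by rw [Finset.sum_const, Finset.card_range, nsmul_eq_mul]
  -- telescoping: T = Q - P
  have hTQP : T = Q - P := by
    have e1 : ∑ j ∈ Finset.range (k + n), φ (j + 1) x
        = P + ∑ j ∈ Finset.range n, φ (k + j + 1) x := by
      rw [Finset.sum_range_add]
    have e2 : ∑ j ∈ Finset.range (n + k), φ (j + 1) x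
        = (∑ j ∈ Finset.range n, φ (j + 1) x) + Q := by
      rw [Finset.sum_range_add]
      rfl
    have e3 : ∑ j ∈ Finset.range n, φ (j + 1 + k) x
        = ∑ j ∈ Finset.range n, φ (k + j + 1) x :=
      Finset.sum_congr rfl fun j _ => by ring_nf
    have e4 : (k + n) = (n + k) := Nat.add_comm k n
    have : T = (∑ j ∈ Finset.range n, φ (j + 1 + k) x)
        - ∑ j ∈ Finset.range n, φ (j + 1) x := by
      rw [hT, Finset.sum_sub_distrib]
    rw [this, e3]
    rw [e4] at e1
    linarith [e1, e2]
  -- |Q - k * φ n x| ≤ k * (C + D)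
  have hQb : |Q - (k : ℝ) * φ n x| ≤ k * (C + D) := by
    have : Q - (k : ℝ) * φ n x = ∑ j ∈ Finset.range k, (φ (n + (j + 1)) x - φ n x) := by
      rw [hQ, Finset.sum_sub_distrib, Finset.sum_const, Finset.card_range, nsmul_eq_mul]
    rw [this]
    calc |∑ j ∈ Finset.range k, (φ (n + (j + 1)) x - φ n x)|
        ≤ ∑ j ∈ Finset.range k, |φ (n + (j + 1)) x - φ n x| := Finset.abs_sum_le_sum_abs _ _
      _ ≤ ∑ _j ∈ Finset.range k, (C + D) := by
          refine Finset.sum_le_sum fun j hj => ?_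
          have h := hAA n hn (j + 1) (Nat.le_add_left 1 j) x
          have hφj := hD (j + 1) (Finset.mem_range.mp hj) (f^[n] x)
          have hφj' := abs_le.mp hφj
          rw [abs_le]; constructor <;> [linarith [h.2]; linarith [h.1]]
      _ = k * (C + D) := by rw [Finset.sum_const, Finset.card_range, nsmul_eq_mul]
  -- |P| ≤ k * D
  have hPb : |P| ≤ k * D := by
    calc |P| ≤ ∑ j ∈ Finset.range k, |φ (j + 1) x| := Finset.abs_sum_le_sum_abs _ _
      _ ≤ ∑ _j ∈ Finset.range k, D := Finset.sum_le_sum fun j hj =>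
          hD (j + 1) (Finset.mem_range.mp hj) x
      _ = k * D := by rw [Finset.sum_const, Finset.card_range, nsmul_eq_mul]
  have hg0 := abs_le.mp (hD k le_rfl x)
  have hgn := abs_le.mp (hD k le_rfl (f^[n] x))
  have hAT' := abs_le.mp hAT
  have hQb' := abs_le.mp hQb
  have hPb' := abs_le.mp hPb
  have hgg0 : g 0 = φ k x := by simp [hg]
  have hggn : g n = φ k (f^[n] x) := rfl
  rw [abs_le]
  constructor <;> (rw [hb]; rw [hTQP] at hAT'; nlinarith [hAT'.1, hAT'.2])

end Aux

/-- an almost additive sequence is asymptotically additive, and can be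
approximated by Birkhoff sums of the potentials `(1/k) φ_k`. -/
theorem almostAdditive_asympAdditive {M : Type*} [MetricSpace M] [CompactSpace M]
    (f : M → M) (hf : Continuous f) (φ : ℕ → M → ℝ) (hφ : ∀ n, Continuous (φ n))
    (C : ℝ) (hC : 0 < C) (hAA : AlmostAdditiveSeq f φ C) :
    AsympAdditive f φ ∧
      ∀ ξ : ℝ, 0 < ξ → ∃ k : ℕ, 1 ≤ k ∧
        Filter.limsup
          (fun n : ℕ => (⨆ x, |φ n x - birkhoff f (fun y => φ k y / k) n x|) / n) atTop < ξ := by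
  have main : ∀ ξ : ℝ, 0 < ξ → ∃ k : ℕ, 1 ≤ k ∧
      Filter.limsup
        (fun n : ℕ => (⨆ x, |φ n x - birkhoff f (fun y => φ k y / k) n x|) / n) atTop < ξ := by
    intro ξ hξ
    set k : ℕ := ⌊C / ξ⌋₊ + 1 with hkdef
    have hk : 1 ≤ k := Nat.le_add_left 1 _
    have hkpos : (0 : ℝ) < k := by positivity
    have hCk : C / k < ξ := by
      rw [div_lt_iff₀ hkpos]
      have h1 : C / ξ < (k : ℝ) := by
        have := Nat.lt_floor_add_one (C / ξ)
        push_cast [hkdef]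
        exact_mod_cast this
      calc C = (C / ξ) * ξ := by field_simp
        _ < (k : ℝ) * ξ := by exact mul_lt_mul_of_pos_right h1 hξ
        _ = ξ * k := mul_comm _ _
    obtain ⟨D, hD0, hD⟩ := exists_unif_bound φ hφ k
    set u : ℕ → ℝ :=
      fun n => (⨆ x, |φ n x - birkhoff f (fun y => φ k y / k) n x|) / n with hu
    set B : ℝ := C + 2 * D + 2 * D / k with hB
    have hB0 : 0 ≤ B := by positivity
    have hu0 : ∀ n, 0 ≤ u n := fun n =>
      div_nonneg (Real.iSup_nonneg fun x => abs_nonneg _) (Nat.cast_nonneg n)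
    set v : ℕ → ℝ := fun n => C / k + B / n with hv
    have hub : ∀ᶠ n in atTop, u n ≤ v n := by
      filter_upwards [eventually_ge_atTop 1] with n hn
      have hnpos : (0 : ℝ) < n := by exact_mod_cast hn
      have hpt : ∀ x : M, |φ n x - birkhoff f (fun y => φ k y / k) n x|
          ≤ n * (C / k) + B := by
        intro x
        have hbk : birkhoff f (fun y => φ k y / k) n x = birkhoff f (φ k) n x / k := by
          simp [birkhoff, Finset.sum_div]
        have hkey := key_estimate f φ C D k hk hAA hD n hn x
        have heq : φ n x - birkhoff f (φ k) n x / k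
            = ((k : ℝ) * φ n x - birkhoff f (φ k) n x) / k := by
          field_simp
        rw [hbk, heq, abs_div, abs_of_pos hkpos]
        rw [div_le_iff₀ hkpos]
        calc |(k : ℝ) * φ n x - birkhoff f (φ k) n x|
            ≤ n * C + k * (C + 2 * D) + 2 * D := hkey
          _ = (n * (C / k) + B) * k := by rw [hB]; field_simp; ring
      have hs : (⨆ x, |φ n x - birkhoff f (fun y => φ k y / k) n x|)
          ≤ n * (C / k) + B := Real.iSup_le hpt (by positivity)
      have : u n ≤ (n * (C / k) + B) / n := (div_le_div_iff_of_pos_right hnpos).mpr hs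
      refine this.trans (le_of_eq ?_)
      rw [hv]
      field_simp
    have hvt : Tendsto v atTop (𝓝 (C / k)) := by
      have := Filter.Tendsto.add
        (tendsto_const_nhds : Tendsto (fun _ : ℕ => C / (k : ℝ)) atTop (𝓝 (C / k)))
        (tendsto_const_div_atTop_nhds_zero_nat B)
      simpa using this
    refine ⟨k, hk, lt_of_le_of_lt ?_ hCk⟩
    calc Filter.limsup u atTop ≤ Filter.limsup v atTop :=
        Filter.limsup_le_limsup hub
          (Filter.isCoboundedUnder_le_of_le atTop hu0)
          hvt.isBoundedUnder_le
      _ = C / k := hvt.limsup_eq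
  refine ⟨⟨hφ, fun ξ hξ => ?_⟩, main⟩
  obtain ⟨k, hk, h⟩ := main ξ hξ
  exact ⟨fun y => φ k y / k, (hφ k).div_const _, h⟩
end

section
/- Let f : M → M be a continuous map on a compact metric space M, let g be a mistake function, m ≥ 1 an integer and ε > 0. Suppose x, x' ∈ M satisfy d_Λ(x,x') > 4ε for every Λ ∈ I(2g;m,ε) (i.e. x and x' are (2g;m,4ε)-separated). Then for any y ∈ B_m(g;x,ε) and any y' ∈ B_m(g;x',ε) one has d_m(y,y') > 2ε; in particular B_m(y,ε) ∩ B_m(y',ε) = ∅. -/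
open MeasureTheory Filter Topology

/-- if `x` and `x'` are `(2g;m,4ε)`-separated then points of the mistake balls
`B_m(g;x,ε)` and `B_m(g;x',ε)` are `(m,2ε)`-apart, and their `(m,ε)`-dynamical balls are
disjoint. -/
theorem mistakeBall_separation {M : Type*} [MetricSpace M]
    (f : M → M) (hf : Continuous f)
    (g : ℕ → ℝ → ℕ) (ε₀ : ℝ) (hg : IsMistakeFunction g ε₀)
    (m : ℕ) (hm : 1 ≤ m) (ε : ℝ) (hε : 0 < ε) (x x' : M)
    (hsep : ∀ Λ : Finset ℕ, Λ ⊆ Finset.range m → m - 2 * g m ε ≤ Λ.card →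
      ∃ i ∈ Λ, 4 * ε < dist (f^[i] x) (f^[i] x')) :
    ∀ y ∈ mistakeBall f g m x ε, ∀ y' ∈ mistakeBall f g m x' ε,
      (∃ i < m, 2 * ε < dist (f^[i] y) (f^[i] y')) ∧
        dynBall f m y ε ∩ dynBall f m y' ε = ∅ := by
  intro y hy y' hy'
  simp only [mistakeBall, Set.mem_iUnion, Set.mem_setOf_eq] at hy hy'
  obtain ⟨Λ, ⟨hΛr, hΛc⟩, hΛ⟩ := hy
  obtain ⟨Λ', ⟨hΛ'r, hΛ'c⟩, hΛ'⟩ := hy'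
  have hunion : (Λ ∪ Λ').card ≤ m := by
    have : Λ ∪ Λ' ⊆ Finset.range m := Finset.union_subset hΛr hΛ'r
    simpa using Finset.card_le_card this
  have hcard : m - 2 * g m ε ≤ (Λ ∩ Λ').card := by
    have h := Finset.card_union_add_card_inter Λ Λ'
    omega
  obtain ⟨i, hiΛ, hi⟩ := hsep (Λ ∩ Λ') (fun j hj => hΛr (Finset.mem_inter.1 hj).1) hcard
  have hiΛ1 := (Finset.mem_inter.1 hiΛ).1
  have hiΛ2 := (Finset.mem_inter.1 hiΛ).2
  have him : i < m := Finset.mem_range.1 (hΛr hiΛ1)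
  have hxy := hΛ i hiΛ1
  have hx'y' := hΛ' i hiΛ2
  have key : 2 * ε < dist (f^[i] y) (f^[i] y') := by
    have h1 : dist (f^[i] x) (f^[i] x') ≤
        dist (f^[i] x) (f^[i] y) + dist (f^[i] y) (f^[i] y') + dist (f^[i] y') (f^[i] x') :=
      dist_triangle4 _ _ _ _
    have h2 : dist (f^[i] y') (f^[i] x') = dist (f^[i] x') (f^[i] y') := dist_comm _ _
    linarith
  refine ⟨⟨i, him, key⟩, ?_⟩
  ext z
  simp only [Set.mem_inter_iff, Set.mem_empty_iff_false, iff_false, dynBall, Set.mem_setOf_eq]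
  rintro ⟨h1, h2⟩
  have := dist_triangle (f^[i] y) (f^[i] z) (f^[i] y')
  have h1' := h1 i him
  have h2' := h2 i him
  rw [dist_comm] at h2'
  linarith
end

section
/- Let f : M → M be a continuous map on a compact metric space M, let g be a mistake function, let φ : M → ℝ be continuous, and let δ, ε > 0 be such that |φ(u) − φ(v)| < δ/2 whenever d(u,v) ≤ ε. Then for every x ∈ M, n ≥ 1 and y ∈ B_n(g;x,ε), the Birkhoff sums satisfy S_nφ(y) ≥ S_nφ(x) − C·g(n,ε) − δn/2, where C = 2‖φ‖ + δ and ‖φ‖ is the sup norm of φ. -/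
open MeasureTheory Filter Topology

/-- control of Birkhoff sums on mistake dynamical balls: if `|φ(u) − φ(v)| < δ/2`
whenever `d(u,v) ≤ ε`, then `S_nφ(y) ≥ S_nφ(x) − C·g(n,ε) − δn/2` for `y ∈ B_n(g;x,ε)`, where
`C = 2‖φ‖ + δ`. -/
theorem birkhoff_mistakeBall_bound {M : Type*} [MetricSpace M] [CompactSpace M]
    (f : M → M) (hf : Continuous f)
    (g : ℕ → ℝ → ℕ) (ε₀ : ℝ) (hg : IsMistakeFunction g ε₀)
    (φ : M → ℝ) (hφ : Continuous φ) (δ ε : ℝ) (hδ : 0 < δ) (hε : 0 < ε)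
    (hmod : ∀ u v : M, dist u v ≤ ε → |φ u - φ v| < δ / 2) :
    ∀ x : M, ∀ n : ℕ, 1 ≤ n → ∀ y ∈ mistakeBall f g n x ε,
      birkhoff f φ n x - (2 * (⨆ z : M, |φ z|) + δ) * g n ε - δ * n / 2 ≤
        birkhoff f φ n y := by
  intro x n hn y hy
  -- extract the mistake set Λ
  simp only [mistakeBall, Set.mem_iUnion, Set.mem_setOf_eq] at hy
  obtain ⟨Λ, ⟨hΛsub, hΛcard⟩, hΛdist⟩ := hy
  set S : ℝ := ⨆ z : M, |φ z| with hS
  -- boundedness of |φ|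
  have hM : Nonempty M := ⟨x⟩
  obtain ⟨z0, -, hz0⟩ := (isCompact_univ (X := M)).exists_isMaxOn Set.univ_nonempty
    ((continuous_abs.comp hφ).continuousOn)
  have hbdd : BddAbove (Set.range fun z : M => |φ z|) :=
    ⟨|φ z0|, by rintro _ ⟨z, rfl⟩; exact hz0 (Set.mem_univ z)⟩
  have hSle : ∀ z : M, |φ z| ≤ S := fun z => le_ciSup hbdd z
  have hS0 : 0 ≤ S := le_trans (abs_nonneg _) (hSle x)
  -- pointwise bounds
  have key : birkhoff f φ n x - birkhoff f φ n y ≤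
      (2 * S + δ) * g n ε + δ * n / 2 := by
    have hsum : birkhoff f φ n x - birkhoff f φ n y =
        ∑ j ∈ Finset.range n, (φ (f^[j] x) - φ (f^[j] y)) := by
      simp [birkhoff, Finset.sum_sub_distrib]
    rw [hsum, ← Finset.sum_sdiff hΛsub]
    have h1 : ∑ j ∈ Finset.range n \ Λ, (φ (f^[j] x) - φ (f^[j] y)) ≤
        (2 * S + δ) * g n ε := by
      have hb : ∀ j ∈ Finset.range n \ Λ, φ (f^[j] x) - φ (f^[j] y) ≤ 2 * S := by
        intro j _
        have := abs_sub_abs_le_abs_sub (φ (f^[j] x)) (φ (f^[j] y))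
        calc φ (f^[j] x) - φ (f^[j] y) ≤ |φ (f^[j] x)| + |φ (f^[j] y)| := by
              have := abs_nonneg (φ (f^[j] y))
              have h1 := le_abs_self (φ (f^[j] x))
              have h2 := neg_abs_le (φ (f^[j] y))
              linarith
          _ ≤ S + S := add_le_add (hSle _) (hSle _)
          _ = 2 * S := by ring
      calc ∑ j ∈ Finset.range n \ Λ, (φ (f^[j] x) - φ (f^[j] y)) ≤
            ∑ _j ∈ Finset.range n \ Λ, (2 * S) := Finset.sum_le_sum hb
        _ = ((Finset.range n \ Λ).card : ℝ) * (2 * S) := by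
            rw [Finset.sum_const, nsmul_eq_mul]
        _ ≤ (g n ε : ℝ) * (2 * S) := by
            apply mul_le_mul_of_nonneg_right _ (by linarith)
            have hcard : (Finset.range n \ Λ).card = n - Λ.card := by
              rw [Finset.card_sdiff_of_subset hΛsub, Finset.card_range]
            have : (Finset.range n \ Λ).card ≤ g n ε := by
              rw [hcard]; omega
            exact_mod_cast this
        _ ≤ (2 * S + δ) * g n ε := by nlinarith [Nat.cast_nonneg (α := ℝ) (g n ε)]
    have h2 : ∑ j ∈ Λ, (φ (f^[j] x) - φ (f^[j] y)) ≤ δ * n / 2 := by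
      have hb : ∀ j ∈ Λ, φ (f^[j] x) - φ (f^[j] y) ≤ δ / 2 := by
        intro j hj
        have := hmod (f^[j] x) (f^[j] y) (le_of_lt (hΛdist j hj))
        have := le_abs_self (φ (f^[j] x) - φ (f^[j] y))
        linarith
      calc ∑ j ∈ Λ, (φ (f^[j] x) - φ (f^[j] y)) ≤ ∑ _j ∈ Λ, (δ / 2) :=
            Finset.sum_le_sum hb
        _ = (Λ.card : ℝ) * (δ / 2) := by rw [Finset.sum_const, nsmul_eq_mul]
        _ ≤ (n : ℝ) * (δ / 2) := by
            apply mul_le_mul_of_nonneg_right _ (by linarith)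
            exact_mod_cast Finset.card_le_card hΛsub |>.trans_eq (Finset.card_range n)
        _ = δ * n / 2 := by ring
    linarith
  linarith
end

section
/- Let f : M → M be a continuous map on a compact metric space M and let Ψ = {ψ_n} be a sub-additive sequence of continuous functions such that the sequence {ψ_n/n} is equicontinuous and inf_{n≥1} ψ_n(x)/n > −∞ for every x ∈ M. Then there is a subsequence of {ψ_n/n} converging uniformly to a continuous function g : M → ℝ, and for every f-invariant Borel probability measure μ one has F_*(μ,Ψ) = ∫ g dμ; in particular the map μ ↦ F_*(μ,Ψ) is continuous on M_f in the weak* topology. -/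
open MeasureTheory Filter Topology

/-- for a sub-additive sequence with equicontinuous, pointwise lower bounded
averages, some subsequence of `{ψ_n/n}` converges uniformly to a continuous `g`, the
functional `F_*(·,Ψ)` is given by `∫ g dμ` on invariant probability measures, and in
particular `μ ↦ F_*(μ,Ψ)` is weak* continuous on the invariant probability measures. -/
theorem subadditive_equicontinuous_Fstar {M : Type*} [MetricSpace M] [CompactSpace M]
    [MeasurableSpace M] [BorelSpace M]
    (f : M → M) (hf : Continuous f)
    (Ψ : ℕ → M → ℝ) (hΨcont : ∀ n, Continuous (Ψ n)) (hΨsub : SubAdditiveSeq f Ψ)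
    (hΨequi : Equicontinuous (fun n : ℕ => fun x : M => Ψ n x / n))
    (hΨbdd : ∀ x : M, ∃ b : ℝ, ∀ n : ℕ, 1 ≤ n → b ≤ Ψ n x / n) :
    ∃ g : M → ℝ, Continuous g ∧
      (∃ σ : ℕ → ℕ, StrictMono σ ∧ (∀ k, 1 ≤ σ k) ∧
        TendstoUniformly (fun k x => Ψ (σ k) x / (σ k : ℝ)) g atTop) ∧
      (∀ μ : Measure M, IsProbabilityMeasure μ → MeasurePreserving f μ μ →
        Fstar Ψ μ = ∫ x, g x ∂μ) ∧
      Continuous (fun μ : {μ : ProbabilityMeasure M //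
          MeasurePreserving f (μ : Measure M) (μ : Measure M)} =>
        Fstar Ψ (μ.1 : Measure M)) := by
  classical
  -- A uniform upper bound for `Ψ 1`.
  obtain ⟨S, hS⟩ : ∃ S : ℝ, ∀ x : M, Ψ 1 x ≤ S := by
    rcases isEmpty_or_nonempty M with h | h
    · exact ⟨0, fun x => (IsEmpty.false x).elim⟩
    · obtain ⟨z, -, hz⟩ := isCompact_univ.exists_isMaxOn Set.univ_nonempty
        (hΨcont 1).continuousOn
      exact ⟨Ψ 1 z, fun x => hz (Set.mem_univ x)⟩
  -- Uniform upper bound for `Ψ n / n`.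
  have hub : ∀ n : ℕ, 1 ≤ n → ∀ x : M, Ψ n x ≤ n * S := by
    intro n hn
    induction n with
    | zero => omega
    | succ m ih =>
      rcases Nat.lt_or_ge 1 (m + 1) with h1 | h1
      · have hm : 1 ≤ m := by omega
        intro x
        calc Ψ (m + 1) x ≤ Ψ m x + Ψ 1 (f^[m] x) := hΨsub m hm 1 le_rfl x
          _ ≤ m * S + S := add_le_add (ih hm x) (hS _)
          _ = ((m + 1 : ℕ) : ℝ) * S := by push_cast; ring
      · have hm0 : m = 0 := by omega
        subst hm0
        intro x
        simpa using hS x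
  have hub' : ∀ n : ℕ, 1 ≤ n → ∀ x : M, Ψ n x / n ≤ S := by
    intro n hn x
    rw [div_le_iff₀ (by exact_mod_cast hn : (0 : ℝ) < n)]
    rw [mul_comm]
    exact hub n hn x
  -- Uniform lower bound for `Ψ n / n`, via equicontinuity and compactness.
  obtain ⟨B, hB⟩ : ∃ B : ℝ, ∀ x : M, ∀ n : ℕ, 1 ≤ n → B ≤ Ψ n x / n := by
    have key : ∀ x : M, ∃ b : ℝ, ∃ U ∈ 𝓝 x, ∀ y ∈ U, ∀ n : ℕ, 1 ≤ n → b ≤ Ψ n y / n := by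
      intro x
      obtain ⟨b, hb⟩ := hΨbdd x
      have h1 := hΨequi x _ (Metric.dist_mem_uniformity one_pos)
      refine ⟨b - 1, {y | ∀ n : ℕ, dist (Ψ n x / (n : ℝ)) (Ψ n y / (n : ℝ)) < 1}, h1, ?_⟩
      intro y hy n hn
      have h2 := hy n
      rw [Real.dist_eq] at h2
      have h3 := hb n hn
      have h4 := abs_sub_lt_iff.mp h2
      linarith [h4.1, h4.2]
    choose b U hU hb using key
    obtain ⟨t, -, ht⟩ := isCompact_univ.elim_nhds_subcover U (fun x _ => hU x)
    rcases t.eq_empty_or_nonempty with rfl | hne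
    · refine ⟨0, fun x n hn => ?_⟩
      have := ht (Set.mem_univ x)
      simp at this
    · refine ⟨t.inf' hne b, fun x n hn => ?_⟩
      obtain ⟨z, hz, hxz⟩ := Set.mem_iUnion₂.mp (ht (Set.mem_univ x))
      exact le_trans (Finset.inf'_le b hz) (hb z x hxz n hn)
  -- The family as bounded continuous functions and Arzelà–Ascoli.
  let Fb : ℕ → BoundedContinuousFunction M ℝ := fun k => BoundedContinuousFunction.mkOfCompact
    ⟨fun x => Ψ (k + 1) x / ((k + 1 : ℕ) : ℝ), ((hΨcont (k + 1)).div_const _)⟩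
  have hAA : IsCompact (closure (Set.range Fb)) := by
    apply BoundedContinuousFunction.arzela_ascoli (Set.Icc B S) isCompact_Icc
    · rintro ψ x ⟨k, rfl⟩
      exact ⟨hB x (k + 1) (Nat.succ_le_succ (Nat.zero_le _)),
        hub' (k + 1) (Nat.succ_le_succ (Nat.zero_le _)) x⟩
    · intro x Uent hUent
      filter_upwards [hΨequi x _ hUent] with y hy
      rintro ⟨ψ, k, rfl⟩
      exact hy (k + 1)
  obtain ⟨gb, -, φ, hφmono, hφtend⟩ :=
    hAA.tendsto_subseq (fun k => subset_closure (Set.mem_range_self k))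
  have hunif : TendstoUniformly
      (fun k x => Ψ (φ k + 1) x / ((φ k + 1 : ℕ) : ℝ)) (⇑gb) atTop :=
    BoundedContinuousFunction.tendsto_iff_tendstoUniformly.mp hφtend
  -- The main identification `F_*(μ, Ψ) = ∫ gb dμ`.
  have key : ∀ μ : Measure M, IsProbabilityMeasure μ → MeasurePreserving f μ μ →
      Fstar Ψ μ = ∫ x, gb x ∂μ := by
    intro μ hprob hpres
    haveI := hprob
    have hIntC : ∀ ψ : M → ℝ, Continuous ψ → Integrable ψ μ := fun ψ hψ =>
      (BoundedContinuousFunction.mkOfCompact ⟨ψ, hψ⟩).integrable μ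
    have hInt : ∀ n, Integrable (Ψ n) μ := fun n => hIntC _ (hΨcont n)
    have hcomp : ∀ m n : ℕ, ∫ x, Ψ n (f^[m] x) ∂μ = ∫ x, Ψ n x ∂μ := by
      intro m n
      have hmp : MeasurePreserving f^[m] μ μ := hpres.iterate m
      conv_rhs => rw [← hmp.map_eq]
      rw [integral_map hmp.measurable.aemeasurable (hΨcont n).aestronglyMeasurable]
    set u : ℕ → ℝ := fun n => if n = 0 then 0 else ∫ x, Ψ n x ∂μ with hu
    have hsub : Subadditive u := by
      intro m n
      rcases Nat.eq_zero_or_pos m with rfl | hm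
      · simp [hu]
      rcases Nat.eq_zero_or_pos n with rfl | hn
      · simp [hu]
      have h1 : ∫ x, Ψ (m + n) x ∂μ ≤ ∫ x, (Ψ m x + Ψ n (f^[m] x)) ∂μ :=
        integral_mono (hInt (m + n))
          ((hInt m).add (hIntC _ ((hΨcont n).comp (hf.iterate m)))) (hΨsub m hm n hn)
      rw [integral_add (hInt m) (hIntC (fun x => Ψ n (f^[m] x)) ((hΨcont n).comp (hf.iterate m))), hcomp m n] at h1
      simpa [hu, hm.ne', hn.ne', Nat.add_eq_zero] using h1
    have hbdd : BddBelow (Set.range fun n => u n / n) := by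
      refine ⟨min B 0, ?_⟩
      rintro r ⟨n, rfl⟩
      rcases Nat.eq_zero_or_pos n with rfl | hn
      · simp [hu]
      · have hBn : B ≤ (∫ x, Ψ n x ∂μ) / n := by
          rw [le_div_iff₀ (by exact_mod_cast hn : (0 : ℝ) < n)]
          have h2 : ∫ _ : M, B * (n : ℝ) ∂μ ≤ ∫ x, Ψ n x ∂μ := by
            refine integral_mono (integrable_const _) (hInt n) fun x => ?_
            have := hB x n hn
            rw [le_div_iff₀ (by exact_mod_cast hn : (0 : ℝ) < n)] at this
            linarith
          simpa [measure_univ] using h2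
        simp only [hu, hn.ne', if_false]
        exact le_trans (min_le_left _ _) hBn
    have hlim := hsub.tendsto_lim hbdd
    have hv : Tendsto (fun n : ℕ => (∫ x, Ψ n x ∂μ) / n) atTop (𝓝 hsub.lim) := by
      refine hlim.congr' ?_
      filter_upwards [eventually_ge_atTop 1] with n hn
      simp only [hu]
      rw [if_neg (by omega : ¬n = 0)]
    have hσtop : Tendsto (fun k => φ k + 1) atTop atTop :=
      (tendsto_add_atTop_nat 1).comp hφmono.tendsto_atTop
    have hsub1 : Tendsto (fun k => (∫ x, Ψ (φ k + 1) x ∂μ) / ((φ k + 1 : ℕ) : ℝ))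
        atTop (𝓝 hsub.lim) := hv.comp hσtop
    have hsub2 : Tendsto (fun k => (∫ x, Ψ (φ k + 1) x ∂μ) / ((φ k + 1 : ℕ) : ℝ))
        atTop (𝓝 (∫ x, gb x ∂μ)) := by
      have heq : ∀ k, (∫ x, Ψ (φ k + 1) x ∂μ) / ((φ k + 1 : ℕ) : ℝ) =
          ∫ x, Ψ (φ k + 1) x / ((φ k + 1 : ℕ) : ℝ) ∂μ := fun k => (integral_div _ _).symm
      simp only [heq]
      refine tendsto_integral_of_dominated_convergence (fun _ => max |B| |S|)
        (fun k => ((hΨcont _).div_const _).aestronglyMeasurable)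
        (integrable_const _) (fun k => ?_) ?_
      · refine Filter.Eventually.of_forall fun x => ?_
        have h1 := hB x (φ k + 1) (Nat.succ_le_succ (Nat.zero_le _))
        have h2 := hub' (φ k + 1) (Nat.succ_le_succ (Nat.zero_le _)) x
        rw [Real.norm_eq_abs, abs_le]
        constructor
        · have := neg_abs_le B; have := le_max_left |B| |S|; linarith
        · have := le_abs_self S; have := le_max_right |B| |S|; linarith
      · exact Filter.Eventually.of_forall fun x => hunif.tendsto_at x
    have hfin : hsub.lim = ∫ x, gb x ∂μ := tendsto_nhds_unique hsub1 hsub2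
    calc Fstar Ψ μ = hsub.lim := hv.limsup_eq
      _ = ∫ x, gb x ∂μ := hfin
  refine ⟨⇑gb, gb.continuous, ⟨fun k => φ k + 1,
      fun a b hab => Nat.add_lt_add_right (hφmono hab) 1,
      fun k => Nat.succ_le_succ (Nat.zero_le _), hunif⟩, key, ?_⟩
  have hc : Continuous fun ν : ProbabilityMeasure M => ∫ x, gb x ∂(ν : Measure M) :=
    MeasureTheory.ProbabilityMeasure.continuous_integral_boundedContinuousFunction gb
  refine (hc.comp continuous_subtype_val).congr fun μsub => ?_
  exact (key (μsub.1 : Measure M) inferInstance μsub.2).symm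
end
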